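/- Every archimedean absolute value on ℚ is a positive real power of the usual absolute value. -/

import Mathlib

open Rat.AbsoluteValue

theorem stmt_14 (φ : AbsoluteValue ℚ ℝ)
    (hunbdd : ¬ ∃ B : ℝ, ∀ n : ℤ, φ (n : ℚ) ≤ B) :
    ∃ α : ℝ, 0 < α ∧ ∀ x : ℚ, φ x = |x| ^ α := by
  let f : MulRingNorm ℚ :=
  { toFun := φ
    map_zero' := φ.map_zero
    map_one' := φ.map_one
    add_le' := φ.add_le
    map_mul' := φ.map_mul
    neg' := fun x => φ.map_neg x
    eq_zero_of_map_eq_zero' := fun x hx => φ.eq_zero.mp hx }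
  have notbdd : ¬ ∀ n : ℕ, f n ≤ 1 := by
    intro h
    apply hunbdd
    refine ⟨1, fun n => ?_⟩
    have h2 : φ ((n.natAbs : ℚ)) ≤ 1 := h n.natAbs
    have h3 : ((n.natAbs : ℚ)) = |(n : ℚ)| := by push_cast [Nat.cast_natAbs]; ring
    rw [h3] at h2
    rcases abs_choice ((n : ℚ)) with h4 | h4 <;> rw [h4] at h2
    · exact h2
    · rwa [φ.map_neg] at h2
  obtain ⟨c, hc, hfc⟩ := AbsoluteValue.isEquiv_iff_exists_rpow_eq.mp (equiv_real_of_unbounded (f := φ) notbdd)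
  refine ⟨c⁻¹, inv_pos.mpr hc, fun x => ?_⟩
  have := congrFun hfc x
  simp only [real_eq_abs] at this
  have h1 : φ x = ((|x| : ℚ) : ℝ) ^ (c⁻¹ : ℝ) := by
    have this2 : φ x ^ c = ((|x| : ℚ) : ℝ) := this
    rw [← this2, ← Real.rpow_mul (φ.nonneg x), mul_inv_cancel₀ hc.ne', Real.rpow_one]
  exact_mod_cast h1
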